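/- Let Γ = (V,E) be a point-symmetric reflexive relation of finite degree r ≥ 2 on a finite set V, connected in the sense that V = ⋃_{i≥0} Γ^i(v) for some (equivalently, every) v, with E ≠ V × V. If A is an atom of Γ and either a(Γ) ≤ a(Γ⁻) holds, then |A| ≤ κ(Γ) and the induced relation Γ[A] is point-symmetric. -/

import Mathlib

/-- Image of a point under a relation. -/
def relImage {V : Type*} (E : V → V → Prop) (a : V) : Set V := {x | E a x}

/-- Image of a set under a relation. -/
def relSetImage {V : Type*} (E : V → V → Prop) (A : Set V) : Set V :=
  {y | ∃ x ∈ A, E x y}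

/-- j-fold relational composition, with `relPow E 0` the identity relation. -/
def relPow {V : Type*} (E : V → V → Prop) : ℕ → V → V → Prop
  | 0 => fun x y => x = y
  | (n+1) => fun x y => ∃ z, relPow E n x z ∧ E z y

/-- `f` is an automorphism of the relation `E`. -/
def IsRelAuto {V : Type*} (E : V → V → Prop) (f : V ≃ V) : Prop :=
  ∀ x y, E x y ↔ E (f x) (f y)

/-- The relation `E` is point-symmetric (vertex-transitive). -/
def PointSym {V : Type*} (E : V → V → Prop) : Prop :=
  ∀ x y : V, ∃ f : V ≃ V, IsRelAuto E f ∧ f x = y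

/-- Boundary of a set: `∂(X) = Γ(X) \ X`. -/
def relBd {V : Type*} (E : V → V → Prop) (X : Set V) : Set V :=
  relSetImage E X \ X

/-- Admissible sets for the definition of connectivity. -/
def relAdm {V : Type*} (E : V → V → Prop) (X : Set V) : Prop :=
  X.Finite ∧ X.Nonempty ∧ relSetImage E X ≠ Set.univ

/-- Connectivity: minimum boundary size over admissible sets. -/
noncomputable def relKappa {V : Type*} (E : V → V → Prop) : ℕ :=
  sInf {n | ∃ X : Set V, relAdm E X ∧ (relBd E X).ncard = n}

/-- A fragment achieves the connectivity. -/
def IsFragment {V : Type*} (E : V → V → Prop) (X : Set V) : Prop :=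
  relAdm E X ∧ (relBd E X).ncard = relKappa E

/-- Cardinality of an atom. -/
noncomputable def atomCard {V : Type*} (E : V → V → Prop) : ℕ :=
  sInf {n | ∃ X : Set V, IsFragment E X ∧ X.ncard = n}

/-- An atom: a fragment of minimum cardinality. -/
def IsRelAtom {V : Type*} (E : V → V → Prop) (A : Set V) : Prop :=
  IsFragment E A ∧ A.ncard = atomCard E

/-- `E` has a directed cycle of length `k`: `k` distinct vertices cyclically joined. -/
def HasCycle {V : Type*} (E : V → V → Prop) (k : ℕ) : Prop :=
  ∃ (a : V) (l : List V), (a :: l).length = k ∧ (a :: l).Nodup ∧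
    List.Chain E a (l ++ [a])

set_option linter.unusedSectionVars false
set_option linter.unusedVariables false
open Set
open scoped Classical

section Aux

variable {V : Type*} [Fintype V] {E : V → V → Prop}

lemma relSetImage_mono {X Y : Set V} (h : X ⊆ Y) : relSetImage E X ⊆ relSetImage E Y := by
  rintro z ⟨x, hx, hxz⟩; exact ⟨x, h hx, hxz⟩

lemma relSetImage_union (E : V → V → Prop) (X Y : Set V) :
    relSetImage E (X ∪ Y) = relSetImage E X ∪ relSetImage E Y := by
  ext z
  constructor
  · rintro ⟨x, hx | hx, hxz⟩
    · exact Or.inl ⟨x, hx, hxz⟩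
    · exact Or.inr ⟨x, hx, hxz⟩
  · rintro (⟨x, hx, hxz⟩ | ⟨x, hx, hxz⟩)
    · exact ⟨x, Or.inl hx, hxz⟩
    · exact ⟨x, Or.inr hx, hxz⟩

lemma subset_relSetImage (hrefl : ∀ x, E x x) (X : Set V) : X ⊆ relSetImage E X :=
  fun x hx => ⟨x, hx, hrefl x⟩

lemma kappa_le {X : Set V} (hX : relAdm E X) : relKappa E ≤ (relBd E X).ncard :=
  Nat.sInf_le ⟨X, hX, rfl⟩

lemma atomCard_le {X : Set V} (hX : IsFragment E X) : atomCard E ≤ X.ncard :=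
  Nat.sInf_le ⟨X, hX, rfl⟩

lemma ncard_relSetImage (hrefl : ∀ x, E x x) (X : Set V) :
    (relSetImage E X).ncard = X.ncard + (relBd E X).ncard := by
  have h := Set.ncard_diff_add_ncard_of_subset (subset_relSetImage hrefl X)
    (Set.toFinite _)
  rw [relBd]; omega

end Aux

section Auto

variable {V : Type*} [Fintype V] {E : V → V → Prop} {f : V ≃ V}

lemma relAuto_rev (hf : IsRelAuto E f) : IsRelAuto (fun a b => E b a) f :=
  fun x y => hf y x

lemma image_relImage (hf : IsRelAuto E f) (x : V) :
    relImage E (f x) = f '' relImage E x := by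
  ext z
  constructor
  · intro hz
    refine ⟨f.symm z, ?_, f.apply_symm_apply z⟩
    have := (hf x (f.symm z)).mpr
    rw [f.apply_symm_apply] at this
    exact this hz
  · rintro ⟨w, hw, rfl⟩
    exact (hf x w).mp hw

lemma image_relSetImage (hf : IsRelAuto E f) (X : Set V) :
    relSetImage E (f '' X) = f '' relSetImage E X := by
  ext z
  constructor
  · rintro ⟨y, ⟨x, hx, rfl⟩, hyz⟩
    refine ⟨f.symm z, ⟨x, hx, ?_⟩, f.apply_symm_apply z⟩
    have := (hf x (f.symm z)).mpr
    rw [f.apply_symm_apply] at this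
    exact this hyz
  · rintro ⟨y, ⟨x, hx, hxy⟩, rfl⟩
    exact ⟨f x, ⟨x, hx, rfl⟩, (hf x y).mp hxy⟩

lemma image_relBd (hf : IsRelAuto E f) (X : Set V) :
    relBd E (f '' X) = f '' relBd E X := by
  rw [relBd, relBd, image_relSetImage hf, Set.image_diff f.injective]

lemma relAdm_image (hf : IsRelAuto E f) {X : Set V} (hX : relAdm E X) :
    relAdm E (f '' X) := by
  refine ⟨Set.toFinite _, hX.2.1.image f, ?_⟩
  rw [image_relSetImage hf]
  intro h
  apply hX.2.2
  have := congrArg (fun s => f.symm '' s) h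
  simp only [Set.image_image] at this
  simpa [Set.image_univ] using this

lemma isFragment_image (hf : IsRelAuto E f) {X : Set V} (hX : IsFragment E X) :
    IsFragment E (f '' X) := by
  refine ⟨relAdm_image hf hX.1, ?_⟩
  rw [image_relBd hf, Set.ncard_image_of_injective _ f.injective]
  exact hX.2

lemma isRelAtom_image (hf : IsRelAuto E f) {X : Set V} (hX : IsRelAtom E X) :
    IsRelAtom E (f '' X) := by
  refine ⟨isFragment_image hf hX.1, ?_⟩
  rw [Set.ncard_image_of_injective _ f.injective]
  exact hX.2

lemma relPow_map (hf : IsRelAuto E f) :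
    ∀ i x y, relPow E i x y → relPow E i (f x) (f y) := by
  intro i
  induction i with
  | zero => intro x y h; exact congrArg f h
  | succ n ih =>
    rintro x y ⟨z, hz, hzy⟩
    exact ⟨f z, ih x z hz, (hf z y).mp hzy⟩

end Auto

section Conn

variable {V : Type*} [Fintype V] {E : V → V → Prop}

lemma conn_from (hsym : PointSym E) {v : V} (hconn : ∀ w, ∃ i, relPow E i v w) :
    ∀ u w, ∃ i, relPow E i u w := by
  intro u w
  obtain ⟨f, hf, hfv⟩ := hsym v u
  obtain ⟨i, hi⟩ := hconn (f.symm w)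
  refine ⟨i, ?_⟩
  have := relPow_map hf i v (f.symm w) hi
  rwa [hfv, f.apply_symm_apply] at this

lemma closed_eq_univ (hsym : PointSym E) {v : V} (hconn : ∀ w, ∃ i, relPow E i v w)
    {X : Set V} (hne : X.Nonempty) (hcl : relSetImage E X ⊆ X) : X = Set.univ := by
  obtain ⟨x₀, hx₀⟩ := hne
  refine Set.eq_univ_of_forall fun w => ?_
  obtain ⟨i, hi⟩ := conn_from hsym hconn x₀ w
  clear hconn
  induction i generalizing w with
  | zero => rwa [← hi]
  | succ n ih =>
    obtain ⟨z, hz, hzw⟩ := hi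
    exact hcl ⟨z, ih z hz, hzw⟩

end Conn

section Kappa

variable {V : Type*} [Fintype V] {E : V → V → Prop}

/-- κ(E) ≤ κ(E⁻), given some non-edge. -/
lemma kappa_le_kappa_rev (hne : ¬ ∀ x y, E x y) :
    relKappa E ≤ relKappa (fun a b => E b a) := by
  set Er := fun a b => E b a with hEr
  push_neg at hne
  obtain ⟨x, y, hxy⟩ := hne
  have hadm : relAdm Er {y} := by
    refine ⟨Set.toFinite _, ⟨y, rfl⟩, ?_⟩
    intro h
    have : x ∈ relSetImage Er {y} := h ▸ Set.mem_univ x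
    obtain ⟨w, hw, hwx⟩ := this
    rw [Set.mem_singleton_iff] at hw
    subst hw
    exact hxy hwx
  refine le_csInf ⟨_, {y}, hadm, rfl⟩ ?_
  rintro n ⟨Y, hY, rfl⟩
  -- F := (Γ⁻(Y))ᶜ is E-admissible with ∂F ⊆ ∂⁻Y
  set F : Set V := (relSetImage Er Y)ᶜ with hF
  have hYF : ∀ w ∈ F, ∀ z ∈ Y, ¬ E w z := by
    intro w hw z hz hwz
    exact hw ⟨z, hz, hwz⟩
  have hFadm : relAdm E F := by
    refine ⟨Set.toFinite _, ?_, ?_⟩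
    · exact Set.nonempty_compl.mpr hY.2.2
    · intro h
      obtain ⟨z, hz⟩ := hY.2.1
      have : z ∈ relSetImage E F := h ▸ Set.mem_univ z
      obtain ⟨w, hw, hwz⟩ := this
      exact hYF w hw z hz hwz
  have hbd : relBd E F ⊆ relBd Er Y := by
    rintro z ⟨hz1, hz2⟩
    rw [hF, Set.mem_compl_iff, not_not] at hz2
    refine ⟨hz2, fun hzY => ?_⟩
    obtain ⟨w, hw, hwz⟩ := hz1
    exact hYF w hw z hzY hwz
  calc relKappa E ≤ (relBd E F).ncard := kappa_le hFadm
    _ ≤ (relBd Er Y).ncard := Set.ncard_le_ncard hbd (Set.toFinite _)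

/-- The complement of the image of a fragment is a fragment of the reverse relation. -/
lemma cofragment (hne : ¬ ∀ x y, E x y) {A : Set V} (hA : IsFragment E A) :
    IsFragment (fun a b => E b a) ((relSetImage E A)ᶜ) := by
  set Er := fun a b => E b a with hEr
  set D : Set V := (relSetImage E A)ᶜ with hD
  have hAD : ∀ x ∈ A, ∀ w ∈ D, ¬ E x w := by
    intro x hx w hw hxw
    exact hw ⟨x, hx, hxw⟩
  have hadm : relAdm Er D := by
    refine ⟨Set.toFinite _, Set.nonempty_compl.mpr hA.1.2.2, ?_⟩
    intro h
    obtain ⟨x, hx⟩ := hA.1.2.1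
    have : x ∈ relSetImage Er D := h ▸ Set.mem_univ x
    obtain ⟨w, hw, hwx⟩ := this
    exact hAD x hx w hw hwx
  have hbd : relBd Er D ⊆ relBd E A := by
    rintro z ⟨hz1, hz2⟩
    rw [hD, Set.mem_compl_iff, not_not] at hz2
    refine ⟨hz2, fun hzA => ?_⟩
    obtain ⟨w, hw, hwz⟩ := hz1
    exact hAD z hzA w hw hwz
  refine ⟨hadm, le_antisymm ?_ (kappa_le hadm)⟩
  calc (relBd Er D).ncard ≤ (relBd E A).ncard := Set.ncard_le_ncard hbd (Set.toFinite _)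
    _ = relKappa E := hA.2
    _ ≤ relKappa Er := kappa_le_kappa_rev hne

end Kappa

section Submod

variable {V : Type*} [Fintype V] {E : V → V → Prop}

lemma submod (hrefl : ∀ x, E x x) (X Y : Set V) :
    (relBd E (X ∩ Y)).ncard + (relBd E (X ∪ Y)).ncard ≤
      (relBd E X).ncard + (relBd E Y).ncard := by
  set P := relSetImage E X with hP
  set Q := relSetImage E Y with hQ
  have hXP : X ⊆ P := subset_relSetImage hrefl X
  have hYQ : Y ⊆ Q := subset_relSetImage hrefl Y
  set S1 : Set V := (P ∩ Q) \ (X ∩ Y) with hS1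
  set S2 : Set V := (P ∪ Q) \ (X ∪ Y) with hS2
  have h1 : relBd E (X ∩ Y) ⊆ S1 := by
    rintro z ⟨hz1, hz2⟩
    exact ⟨⟨relSetImage_mono Set.inter_subset_left hz1,
      relSetImage_mono Set.inter_subset_right hz1⟩, hz2⟩
  have h2 : relBd E (X ∪ Y) ⊆ S2 := by
    rintro z ⟨hz1, hz2⟩
    rw [relSetImage_union] at hz1
    exact ⟨hz1, hz2⟩
  have hU : S1 ∪ S2 = (P \ X) ∪ (Q \ Y) := by
    ext z
    have := @hXP z
    have := @hYQ z
    simp only [hS1, hS2, Set.mem_union, Set.mem_diff, Set.mem_inter_iff]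
    tauto
  have hI : S1 ∩ S2 = (P \ X) ∩ (Q \ Y) := by
    ext z
    have := @hXP z
    have := @hYQ z
    simp only [hS1, hS2, Set.mem_union, Set.mem_diff, Set.mem_inter_iff]
    tauto
  have key : S1.ncard + S2.ncard = (P \ X).ncard + (Q \ Y).ncard := by
    rw [← Set.ncard_union_add_ncard_inter S1 S2 (Set.toFinite _) (Set.toFinite _),
      hU, hI, Set.ncard_union_add_ncard_inter _ _ (Set.toFinite _) (Set.toFinite _)]
  calc (relBd E (X ∩ Y)).ncard + (relBd E (X ∪ Y)).ncard
      ≤ S1.ncard + S2.ncard :=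
        Nat.add_le_add (Set.ncard_le_ncard h1 (Set.toFinite _))
          (Set.ncard_le_ncard h2 (Set.toFinite _))
    _ = (relBd E X).ncard + (relBd E Y).ncard := key

end Submod

section Disjoint

variable {V : Type*} [Fintype V] {E : V → V → Prop}

lemma atoms_eq_of_inter (hrefl : ∀ x, E x x) (hne : ¬ ∀ x y, E x y)
    (hatom : atomCard E ≤ atomCard (fun a b => E b a))
    {A1 A2 : Set V} (h1 : IsRelAtom E A1) (h2 : IsRelAtom E A2)
    (hmeet : (A1 ∩ A2).Nonempty) : A1 = A2 := by
  by_contra hne12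
  set I : Set V := A1 ∩ A2 with hI
  set U : Set V := A1 ∪ A2 with hU
  have hIadm : relAdm E I := by
    refine ⟨Set.toFinite _, hmeet, fun h => h1.1.1.2.2 ?_⟩
    exact Set.eq_univ_of_univ_subset (h ▸ relSetImage_mono Set.inter_subset_left)
  have hIk : relKappa E ≤ (relBd E I).ncard := kappa_le hIadm
  have hInf : (relBd E I).ncard ≠ relKappa E := by
    intro heq
    have hfrag : IsFragment E I := ⟨hIadm, heq⟩
    have hle : atomCard E ≤ I.ncard := atomCard_le hfrag
    have hle1 : I.ncard ≤ A1.ncard := Set.ncard_le_ncard Set.inter_subset_left (Set.toFinite _)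
    have e1 : I = A1 := Set.eq_of_subset_of_ncard_le Set.inter_subset_left
      (by rw [h1.2]; omega) (Set.toFinite _)
    have hle2 : I.ncard ≤ A2.ncard := Set.ncard_le_ncard Set.inter_subset_right (Set.toFinite _)
    have e2 : I = A2 := Set.eq_of_subset_of_ncard_le Set.inter_subset_right
      (by rw [h2.2]; omega) (Set.toFinite _)
    exact hne12 (e1.symm.trans e2)
  have hIgt : relKappa E + 1 ≤ (relBd E I).ncard := by omega
  have hsub := submod hrefl A1 A2
  rw [← hI, ← hU] at hsub
  rw [h1.1.2, h2.1.2] at hsub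
  have hUbd : (relBd E U).ncard + 1 ≤ relKappa E := by omega
  by_cases hUim : relSetImage E U = Set.univ
  · -- counting case
    set N := (Set.univ : Set V).ncard with hN
    have hUc : (relBd E U).ncard + U.ncard = N := by
      have : relBd E U = Set.univ \ U := by rw [relBd, hUim]
      rw [this]
      exact Set.ncard_diff_add_ncard_of_subset (Set.subset_univ U) (Set.toFinite _)
    have hUI : U.ncard + I.ncard = A1.ncard + A2.ncard :=
      Set.ncard_union_add_ncard_inter A1 A2 (Set.toFinite _) (Set.toFinite _)
    have hIpos : 0 < I.ncard := (Set.ncard_pos (Set.toFinite _)).mpr hmeet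
    have hcof := cofragment hne h1.1
    have hD : atomCard E ≤ ((relSetImage E A1)ᶜ).ncard :=
      le_trans hatom (atomCard_le hcof)
    have hsplit : (relSetImage E A1).ncard + ((relSetImage E A1)ᶜ).ncard = N := by
      rw [hN, Set.ncard_univ]
      exact Set.ncard_add_ncard_compl _ (Set.toFinite _) (Set.toFinite _)
    have hGam1 : (relSetImage E A1).ncard = A1.ncard + (relBd E A1).ncard :=
      ncard_relSetImage hrefl A1
    have hk1 : (relBd E A1).ncard = relKappa E := h1.1.2
    have hc1 : A1.ncard = atomCard E := h1.2
    have hc2 : A2.ncard = atomCard E := h2.2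
    omega
  · have : relAdm E U := ⟨Set.toFinite _, h1.1.1.2.1.mono Set.subset_union_left, hUim⟩
    have := kappa_le this
    omega

end Disjoint

section Count

variable {V : Type*} [Fintype V]

lemma sum_inter_relImage (R : V → V → Prop) (C D : Finset V) :
    ∑ x ∈ C, ((D : Set V) ∩ relImage R x).ncard =
      (Finset.univ.filter (fun p : V × V => p.1 ∈ C ∧ p.2 ∈ D ∧ R p.1 p.2)).card := by
  classical
  rw [Finset.card_eq_sum_card_fiberwise
    (f := Prod.fst) (t := C) (by intro p hp; simp only [Finset.mem_coe, Finset.mem_filter] at hp; exact hp.2.1)]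
  refine (Finset.sum_congr rfl ?_)
  intro x hx
  have hset : (D : Set V) ∩ relImage R x = ↑(D.filter fun z => R x z) := by
    ext z
    simp [relImage]
  rw [hset, Set.ncard_coe_finset]
  refine Finset.card_bij (fun z _ => (x, z)) ?_ ?_ ?_
  · intro z hz
    simp only [Finset.mem_filter] at hz ⊢
    exact ⟨⟨Finset.mem_univ _, hx, hz.1, hz.2⟩, trivial⟩
  · intro z1 h1 z2 h2 h
    exact congrArg Prod.snd h
  · intro p hp
    simp only [Finset.mem_filter] at hp
    obtain ⟨⟨-, h1, h2, h3⟩, h4⟩ := hp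
    refine ⟨p.2, ?_, ?_⟩
    · simp only [Finset.mem_filter]
      subst h4
      exact ⟨h2, h3⟩
    · subst h4
      rfl

lemma double_count (R : V → V → Prop) (C D : Finset V) :
    ∑ x ∈ C, ((D : Set V) ∩ relImage R x).ncard =
      ∑ z ∈ D, ((C : Set V) ∩ {w | R w z}).ncard := by
  classical
  rw [sum_inter_relImage R C D]
  have h2 : ∑ z ∈ D, ((C : Set V) ∩ {w | R w z}).ncard =
      (Finset.univ.filter (fun p : V × V => p.1 ∈ D ∧ p.2 ∈ C ∧ R p.2 p.1)).card := by
    have := sum_inter_relImage (fun a b => R b a) D C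
    simpa [relImage] using this
  rw [h2]
  refine Finset.card_bij (fun p _ => p.swap) ?_ ?_ ?_
  · intro p hp
    rw [Finset.mem_filter] at hp ⊢
    exact ⟨Finset.mem_univ _, hp.2.2.1, hp.2.1, hp.2.2.2⟩
  · intro p hp q hq h
    exact Prod.swap_injective h
  · intro p hp
    rw [Finset.mem_filter] at hp
    refine ⟨p.swap, ?_, Prod.swap_swap p⟩
    rw [Finset.mem_filter]
    exact ⟨Finset.mem_univ _, hp.2.2.1, hp.2.1, hp.2.2.2⟩

end Count

section More

variable {V : Type*} [Fintype V] {E : V → V → Prop}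

lemma exists_atom_mem (hsym : PointSym E) {A : Set V} (hA : IsRelAtom E A) (z : V) :
    ∃ B : Set V, IsRelAtom E B ∧ z ∈ B := by
  obtain ⟨a₀, ha₀⟩ := hA.1.1.2.1
  obtain ⟨f, hf, hfz⟩ := hsym a₀ z
  exact ⟨f '' A, isRelAtom_image hf hA, ⟨a₀, ha₀, hfz⟩⟩

lemma image_inSet {f : V ≃ V} (hf : IsRelAuto E f) (z : V) :
    {w | E w (f z)} = f '' {w | E w z} :=
  image_relImage (relAuto_rev hf) z

lemma inNbhd_const (hsym : PointSym E) (z1 z2 : V) :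
    {w | E w z1}.ncard = {w | E w z2}.ncard := by
  obtain ⟨f, hf, hfz⟩ := hsym z1 z2
  rw [← hfz, image_inSet hf, Set.ncard_image_of_injective _ f.injective]

lemma indeg_const (hsym : PointSym E) {r : ℕ} (hdeg : ∀ x, (relImage E x).ncard = r)
    (z : V) : {w | E w z}.ncard = r := by
  have hdc := double_count E Finset.univ Finset.univ
  simp only [Finset.coe_univ, Set.univ_inter] at hdc
  have hL : ∑ x ∈ Finset.univ, (relImage E x).ncard = Fintype.card V * r := by
    rw [Finset.sum_congr rfl (fun x _ => hdeg x), Finset.sum_const, Finset.card_univ,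
      smul_eq_mul]
  have hR : ∑ w ∈ Finset.univ, ({w' | E w' w}).ncard = Fintype.card V * {w | E w z}.ncard := by
    rw [Finset.sum_congr rfl (fun x _ => inNbhd_const hsym x z), Finset.sum_const,
      Finset.card_univ, smul_eq_mul]
  rw [hL, hR] at hdc
  have hpos : 0 < Fintype.card V := Fintype.card_pos_iff.mpr ⟨z⟩
  exact (Nat.eq_of_mul_eq_mul_left hpos hdc).symm

end More

theorem stmt_14 {V : Type*} [Fintype V] (E : V → V → Prop) (r : ℕ) (hr : 2 ≤ r)
    (hrefl : ∀ x, E x x) (hsym : PointSym E)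
    (hdeg : ∀ x, (relImage E x).ncard = r)
    (v : V) (hconn : ∀ w, ∃ i, relPow E i v w)
    (hne : ¬ ∀ x y, E x y)
    (A : Set V) (hA : IsRelAtom E A)
    (hatom : atomCard E ≤ atomCard (fun a b => E b a)) :
    A.ncard ≤ relKappa E ∧ PointSym (fun x y : A => E x.1 y.1) := by
  classical
  have hAadm : relAdm E A := hA.1.1
  obtain ⟨a₀, ha₀⟩ := hAadm.2.1
  choose blk hblkAtom hblkMem using exists_atom_mem hsym hA
  have hblkEq : ∀ (z : V) (B : Set V), IsRelAtom E B → z ∈ B → blk z = B := fun z B hB hzB =>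
    atoms_eq_of_inter hrefl hne hatom (hblkAtom z) hB ⟨z, hblkMem z, hzB⟩
  have hblkA : ∀ x ∈ A, blk x = A := fun x hx => hblkEq x A hA hx
  -- point-symmetry of the induced relation
  have hps : PointSym (fun x y : A => E x.1 y.1) := by
    rintro ⟨x, hx⟩ ⟨y, hy⟩
    obtain ⟨f, hf, hfx⟩ := hsym x y
    have hfAatom : IsRelAtom E (f '' A) := isRelAtom_image hf hA
    have hfA : f '' A = A :=
      atoms_eq_of_inter hrefl hne hatom hfAatom hA ⟨y, ⟨x, hx, hfx⟩, hy⟩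
    have hmem : ∀ z : V, z ∈ A → f z ∈ A := by
      intro z hz
      have : f z ∈ f '' A := ⟨z, hz, rfl⟩
      rwa [hfA] at this
    have hmem' : ∀ z : V, z ∈ A → f.symm z ∈ A := by
      intro z hz
      rw [← hfA] at hz
      obtain ⟨w, hw, hwz⟩ := hz
      rw [← hwz, f.symm_apply_apply]
      exact hw
    refine ⟨⟨fun p => ⟨f p.1, hmem p.1 p.2⟩, fun p => ⟨f.symm p.1, hmem' p.1 p.2⟩,
      fun p => ?_, fun p => ?_⟩, fun p q => hf p.1 q.1, ?_⟩
    · exact Subtype.ext (f.symm_apply_apply p.1)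
    · exact Subtype.ext (f.apply_symm_apply p.1)
    · exact Subtype.ext hfx
  refine ⟨?_, hps⟩
  -- the constant internal out-degree
  set d₀ : ℕ := ((relImage E a₀) ∩ A).ncard with hd₀def
  have hdx : ∀ x : V, ((relImage E x) ∩ blk x).ncard = d₀ := by
    have base : ((relImage E a₀) ∩ blk a₀).ncard = d₀ := by rw [hblkA a₀ ha₀]
    intro x
    obtain ⟨f, hf, hfx⟩ := hsym a₀ x
    have hblkim : blk (f a₀) = f '' blk a₀ :=
      hblkEq _ _ (isRelAtom_image hf (hblkAtom a₀)) ⟨a₀, hblkMem a₀, rfl⟩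
    rw [← hfx, image_relImage hf, hblkim, ← Set.image_inter f.injective,
      Set.ncard_image_of_injective _ f.injective, base]
  -- constant internal in-degree
  have hdmconst : ∀ x y : V, ({w | E w x} ∩ blk x).ncard = ({w | E w y} ∩ blk y).ncard := by
    intro x y
    obtain ⟨f, hf, hfx⟩ := hsym x y
    have hblkim : blk (f x) = f '' blk x :=
      hblkEq _ _ (isRelAtom_image hf (hblkAtom x)) ⟨x, hblkMem x, rfl⟩
    rw [← hfx, image_inSet hf, hblkim, ← Set.image_inter f.injective,
      Set.ncard_image_of_injective _ f.injective]
  -- finsets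
  set FA : Finset V := (Set.toFinite A).toFinset with hFAdef
  have hFAcoe : (FA : Set V) = A := Set.Finite.coe_toFinset _
  have hFAcard : FA.card = A.ncard := (Set.ncard_eq_toFinset_card A (Set.toFinite A)).symm
  have hFAmem : ∀ x, x ∈ FA ↔ x ∈ A := fun x => Set.Finite.mem_toFinset _
  have hApos : 0 < A.ncard := (Set.ncard_pos (Set.toFinite _)).mpr ⟨a₀, ha₀⟩
  -- internal double count : d = d⁻
  have hint := double_count E FA FA
  have hL : ∑ x ∈ FA, ((FA : Set V) ∩ relImage E x).ncard = FA.card * d₀ := by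
    rw [Finset.sum_congr rfl (g := fun _ => d₀) ?_, Finset.sum_const, smul_eq_mul]
    intro x hx
    rw [hFAcoe, Set.inter_comm, ← hblkA x ((hFAmem x).mp hx)]
    exact hdx x
  have hR : ∑ z ∈ FA, ((FA : Set V) ∩ {w | E w z}).ncard =
      FA.card * ({w | E w a₀} ∩ A).ncard := by
    rw [Finset.sum_congr rfl (g := fun _ => ({w | E w a₀} ∩ A).ncard) ?_,
      Finset.sum_const, smul_eq_mul]
    intro z hz
    show ((FA : Set V) ∩ {w | E w z}).ncard = ({w | E w a₀} ∩ A).ncard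
    have h1 : (FA : Set V) ∩ {w | E w z} = {w | E w z} ∩ blk z := by
      rw [hFAcoe, Set.inter_comm, hblkA z ((hFAmem z).mp hz)]
    rw [h1, hdmconst z a₀, hblkA a₀ ha₀]
  have hdm : ({w | E w a₀} ∩ A).ncard = d₀ := by
    have h := hL.symm.trans (hint.trans hR)
    exact (Nat.eq_of_mul_eq_mul_left (by rw [hFAcard]; exact hApos) h).symm
  have hdmz : ∀ z : V, ({w | E w z} ∩ blk z).ncard = d₀ := by
    intro z
    rw [hdmconst z a₀, hblkA a₀ ha₀, hdm]
  -- main double count with Aᶜ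
  set FB : Finset V := (Set.toFinite (relBd E A)).toFinset with hFBdef
  set FC : Finset V := (Set.toFinite (Aᶜ : Set V)).toFinset with hFCdef
  have hFCcoe : (FC : Set V) = Aᶜ := Set.Finite.coe_toFinset _
  have hFBmem : ∀ z, z ∈ FB ↔ z ∈ relBd E A := fun z => Set.Finite.mem_toFinset _
  have hFCmem : ∀ z, z ∈ FC ↔ z ∈ (Aᶜ : Set V) := fun z => Set.Finite.mem_toFinset _
  have hFBcard : FB.card = relKappa E := by
    rw [← hA.1.2]
    exact (Set.ncard_eq_toFinset_card _ (Set.toFinite _)).symm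
  have hmain := double_count E FA FC
  have hML : ∑ x ∈ FA, ((FC : Set V) ∩ relImage E x).ncard = FA.card * (r - d₀) := by
    rw [Finset.sum_congr rfl (g := fun _ => r - d₀) ?_, Finset.sum_const, smul_eq_mul]
    intro x hx
    have hx' := (hFAmem x).mp hx
    have h1 : ((relImage E x) ∩ A).ncard + ((relImage E x) \ A).ncard = r := by
      rw [← hdeg x]
      exact Set.ncard_inter_add_ncard_diff_eq_ncard _ _ (Set.toFinite _)
    have h2 : ((relImage E x) ∩ A).ncard = d₀ := by
      rw [← hblkA x hx']; exact hdx x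
    have h3 : (FC : Set V) ∩ relImage E x = relImage E x \ A := by
      rw [hFCcoe, Set.inter_comm, Set.diff_eq]
    rw [h3]
    show (relImage E x \ A).ncard = r - d₀
    omega
  have hsubB : FB ⊆ FC := by
    intro z hz
    rw [hFBmem] at hz
    rw [hFCmem]
    exact hz.2
  have hvanish : ∀ z ∈ FC, z ∉ FB → ((FA : Set V) ∩ {w | E w z}).ncard = 0 := by
    intro z hz hzB
    rw [hFAcoe]
    have : A ∩ {w | E w z} = ∅ := by
      rw [Set.eq_empty_iff_forall_notMem]
      rintro w ⟨hwA, hwz⟩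
      apply hzB
      rw [hFBmem]
      exact ⟨⟨w, hwA, hwz⟩, (hFCmem z).mp hz⟩
    rw [this, Set.ncard_empty]
  have hbound : ∀ z ∈ FB, ((FA : Set V) ∩ {w | E w z}).ncard ≤ r - d₀ := by
    intro z hz
    have hzbd : z ∈ relBd E A := (hFBmem z).mp hz
    have hzA : z ∉ A := hzbd.2
    have hdisj : ∀ w, w ∈ A → w ∉ blk z := by
      intro w hwA hwb
      have : blk z = A := atoms_eq_of_inter hrefl hne hatom (hblkAtom z) hA ⟨w, hwb, hwA⟩
      exact hzA (this ▸ hblkMem z)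
    have hsubset : (FA : Set V) ∩ {w | E w z} ⊆ {w | E w z} \ blk z := by
      rw [hFAcoe]
      rintro w ⟨hwA, hwz⟩
      exact ⟨hwz, hdisj w hwA⟩
    have h1 : ({w | E w z} ∩ blk z).ncard + ({w | E w z} \ blk z).ncard = r := by
      rw [← indeg_const hsym hdeg z]
      exact Set.ncard_inter_add_ncard_diff_eq_ncard _ _ (Set.toFinite _)
    have h2 := hdmz z
    have h3 : ((FA : Set V) ∩ {w | E w z}).ncard ≤ ({w | E w z} \ blk z).ncard :=
      Set.ncard_le_ncard hsubset (Set.toFinite _)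
    omega
  have hMRle : ∑ z ∈ FB, ((FA : Set V) ∩ {w | E w z}).ncard ≤ FB.card * (r - d₀) := by
    calc ∑ z ∈ FB, ((FA : Set V) ∩ {w | E w z}).ncard ≤ ∑ _z ∈ FB, (r - d₀) :=
          Finset.sum_le_sum hbound
      _ = FB.card * (r - d₀) := by rw [Finset.sum_const, smul_eq_mul]
  -- d₀ < r
  have hd₀lt : d₀ < r := by
    have hd₀le : d₀ ≤ r := by
      rw [hd₀def, ← hdeg a₀]
      exact Set.ncard_le_ncard Set.inter_subset_left (Set.toFinite _)
    rcases lt_or_eq_of_le hd₀le with h | h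
    · exact h
    · exfalso
      have hsub : relSetImage E A ⊆ A := by
        rintro z ⟨x, hx, hxz⟩
        have h1 : ((relImage E x) ∩ A).ncard + ((relImage E x) \ A).ncard = r := by
          rw [← hdeg x]
          exact Set.ncard_inter_add_ncard_diff_eq_ncard _ _ (Set.toFinite _)
        have h2 : ((relImage E x) ∩ A).ncard = d₀ := by
          rw [← hblkA x hx]; exact hdx x
        have h0 : ((relImage E x) \ A).ncard = 0 := by omega
        have hempty : (relImage E x) \ A = ∅ := (Set.ncard_eq_zero (Set.toFinite _)).mp h0
        by_contra hzA
        rw [Set.eq_empty_iff_forall_notMem] at hempty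
        exact hempty z ⟨hxz, hzA⟩
      have hAuniv : A = Set.univ := closed_eq_univ hsym hconn ⟨a₀, ha₀⟩ hsub
      apply hAadm.2.2
      apply Set.eq_univ_of_univ_subset
      calc (Set.univ : Set V) = A := hAuniv.symm
        _ ⊆ relSetImage E A := subset_relSetImage hrefl A
  have final : A.ncard * (r - d₀) ≤ relKappa E * (r - d₀) := by
    calc A.ncard * (r - d₀) = FA.card * (r - d₀) := by rw [hFAcard]
      _ = ∑ x ∈ FA, ((FC : Set V) ∩ relImage E x).ncard := hML.symm
      _ = ∑ z ∈ FC, ((FA : Set V) ∩ {w | E w z}).ncard := hmain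
      _ = ∑ z ∈ FB, ((FA : Set V) ∩ {w | E w z}).ncard :=
          (Finset.sum_subset hsubB hvanish).symm
      _ ≤ FB.card * (r - d₀) := hMRle
      _ = relKappa E * (r - d₀) := by rw [hFBcard]
  exact Nat.le_of_mul_le_mul_right final (by omega)
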